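/- Let a > 0, b > 0, Te ∈ ℝ, Tc > Te, T_δ := Tc − Te, and u < s. Suppose T : [u,s] → ℝ is differentiable with T'(t) = a·P(t) − b·(T(t) − Te) on [u,s], where P(t) ≤ T_δ·b/a for all t ∈ [u,s], and suppose T(u) < Tc. Then Tc − T(t) ≥ (Tc − T(u))·e^{-b(t-u)} for all t ∈ [u,s]; in particular T(t) < Tc for all t ∈ [u,s]. -/

import Mathlib

open MeasureTheory Real Set

theorem stmt_14 (a b Te Tc u s : ℝ) (ha : 0 < a) (hb : 0 < b) (hTc : Te < Tc) (hus : u < s)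
    (P T : ℝ → ℝ)
    (hT : ∀ t ∈ Set.Icc u s, HasDerivAt T (a * P t - b * (T t - Te)) t)
    (hP : ∀ t ∈ Set.Icc u s, P t ≤ (Tc - Te) * b / a)
    (hTu : T u < Tc) :
    ∀ t ∈ Set.Icc u s,
      (Tc - T u) * Real.exp (-b * (t - u)) ≤ Tc - T t ∧ T t < Tc := by
  set g : ℝ → ℝ := fun t => (Tc - T t) * Real.exp (b * (t - u)) with hg
  have hg' : ∀ t ∈ Set.Icc u s, HasDerivAt g
      (Real.exp (b * (t - u)) * (b * (Tc - Te) - a * P t)) t := by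
    intro t ht
    have h1 : HasDerivAt (fun t => Tc - T t) (-(a * P t - b * (T t - Te))) t :=
      (hT t ht).const_sub Tc
    have h2 : HasDerivAt (fun t => Real.exp (b * (t - u))) (Real.exp (b * (t - u)) * b) t := by
      have : HasDerivAt (fun t : ℝ => b * (t - u)) b t := by
        simpa using ((hasDerivAt_id t).sub_const u).const_mul b
      exact (Real.hasDerivAt_exp (b * (t - u))).comp t this
    have : HasDerivAt (fun t => (Tc - T t) * Real.exp (b * (t - u)))
        (-(a * P t - b * (T t - Te)) * Real.exp (b * (t - u)) + (Tc - T t) * (Real.exp (b * (t - u)) * b)) t := h1.mul h2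
    convert this using 1
    ring
  have hmono : MonotoneOn g (Set.Icc u s) := by
    apply monotoneOn_of_deriv_nonneg (convex_Icc u s)
    · exact fun t ht => ((hg' t ht).continuousAt).continuousWithinAt
    · intro t ht
      rw [interior_Icc] at ht
      exact (hg' t (Ioo_subset_Icc_self ht)).differentiableAt.differentiableWithinAt
    · intro t ht
      rw [interior_Icc] at ht
      rw [(hg' t (Ioo_subset_Icc_self ht)).deriv]
      have hPt := hP t (Ioo_subset_Icc_self ht)
      have : a * P t ≤ b * (Tc - Te) := by
        have := mul_le_mul_of_nonneg_left hPt ha.le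
        calc a * P t ≤ a * ((Tc - Te) * b / a) := this
          _ = b * (Tc - Te) := by field_simp
      have e := (Real.exp_pos (b * (t - u))).le
      nlinarith
  intro t ht
  have hgu : g u = Tc - T u := by simp [hg]
  have hle : g u ≤ g t := hmono (Set.left_mem_Icc.mpr hus.le) ht ht.1
  rw [hgu] at hle
  have hexp : Real.exp (-b * (t - u)) = (Real.exp (b * (t - u)))⁻¹ := by
    rw [← Real.exp_neg]; ring_nf
  have hepos : 0 < Real.exp (b * (t - u)) := Real.exp_pos _
  constructor
  · rw [hexp, ← div_eq_mul_inv, div_le_iff₀ hepos]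
    exact hle
  · have h1 : 0 < Tc - T u := by linarith
    have h2 : 0 < (Tc - T t) * Real.exp (b * (t - u)) := lt_of_lt_of_le h1 hle
    nlinarith [hepos]
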